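/- arXiv:1309.5751 — 4 statements merged into one kernel-verified Lean document; each statement's English description precedes it below -/
import Mathlib

section
/- Let K be a valued difference field, F a σ-polynomial over K, and a, b ∈ K with v(b − a) > v(a). Then a is regular for F if and only if b is regular for F. -/
noncomputable section
open scoped Classical

/-- A valued difference field: a valued field `(K, v)` with value group `Γ`
(additive, `v : K → WithTop Γ`, `v 0 = ⊤`), together with a distinguished field
automorphism `σ` fixing the valuation ring setwise; `σΓ` is the induced
order-preserving automorphism of the value group. -/
structure VDF (K : Type*) [Field K] (Γ : Type*) [AddCommGroup Γ] [LinearOrder Γ] [IsOrderedAddMonoid Γ] where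
  v : K → WithTop Γ
  σ : K ≃+* K
  σΓ : Γ ≃o Γ
  v_eq_top_iff : ∀ x : K, v x = ⊤ ↔ x = 0
  v_one : v 1 = 0
  v_mul : ∀ x y : K, v (x * y) = v x + v y
  v_neg : ∀ x : K, v (-x) = v x
  v_add : ∀ x y : K, min (v x) (v y) ≤ v (x + y)
  v_sigma : ∀ x : K, v (σ x) = WithTop.map σΓ (v x)

namespace VDF

variable {K : Type*} [Field K] {Γ : Type*} [AddCommGroup Γ] [LinearOrder Γ] [IsOrderedAddMonoid Γ]

/-- A σ-polynomial of order `≤ n - 1` over `K` is encoded as an ordinary polynomial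
`P` in the variables `X 0, …, X (n-1)`; its value at `a` is obtained by substituting
`σ^k(a)` for `X k`. -/
def sEval (V : VDF K Γ) {n : ℕ} (P : MvPolynomial (Fin n) K) (a : K) : K :=
  MvPolynomial.eval (fun k : Fin n => (⇑V.σ)^[(k : ℕ)] a) P

/-- `σ^i(γ) = Σ_k i_k σ^k(γ)` for a multi-index `i`. -/
def sigmaIdx (V : VDF K Γ) {n : ℕ} (i : Fin n →₀ ℕ) (γ : Γ) : Γ :=
  ∑ k : Fin n, (i k) • (⇑V.σΓ)^[(k : ℕ)] γ

/-- `F_v(γ) = min_i (v(a_i) + σ^i(γ))`, the minimum over the monomials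
(support) of the σ-polynomial `P` with coefficients `a_i`. -/
def Fv (V : VDF K Γ) {n : ℕ} (P : MvPolynomial (Fin n) K) (γ : Γ) : WithTop Γ :=
  P.support.inf fun i => V.v (MvPolynomial.coeff i P) + (V.sigmaIdx i γ : WithTop Γ)

/-- The norm `|j| = Σ_k j_k` of a multi-index. -/
def degSum {n : ℕ} (j : Fin n →₀ ℕ) : ℕ := j.sum fun _ m => m

/-- The formal Taylor coefficient (Hasse derivative) `P_(j)` of a σ-polynomial `P`,
so that `P(y + x) = Σ_j P_(j)(y) σ(x)^j`. -/
def hasse {n : ℕ} (P : MvPolynomial (Fin n) K) (j : Fin n →₀ ℕ) :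
    MvPolynomial (Fin n) K :=
  MvPolynomial.coeff j
    (MvPolynomial.bind₁
      (fun k => (MvPolynomial.C (MvPolynomial.X k) + MvPolynomial.X k :
        MvPolynomial (Fin n) (MvPolynomial (Fin n) K)))
      (MvPolynomial.map MvPolynomial.C P))

/-- `(G, a)` is in σ-hensel configuration with associated `γ`. -/
def InSHC (V : VDF K Γ) {n : ℕ} (P : MvPolynomial (Fin (n + 1)) K) (a : K) (γ : Γ) :
    Prop :=
  (∃ i ∈ P.support, i ≠ 0) ∧
  (∃ i : Fin (n + 1) →₀ ℕ, degSum i = 1 ∧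
      V.v (V.sEval P a) =
        V.v (V.sEval (hasse P i) a) + (V.sigmaIdx i γ : WithTop Γ)) ∧
  (∀ j : Fin (n + 1) →₀ ℕ, degSum j = 1 →
      V.v (V.sEval P a) ≤ V.v (V.sEval (hasse P j) a) + (V.sigmaIdx j γ : WithTop Γ)) ∧
  (∀ j l : Fin (n + 1) →₀ ℕ, j ≠ 0 → l ≠ 0 → hasse P j ≠ 0 →
      V.v (V.sEval (hasse P j) a) + (V.sigmaIdx j γ : WithTop Γ) <
        V.v (V.sEval (hasse P (j + l)) a) + (V.sigmaIdx (j + l) γ : WithTop Γ))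

/-- The residue field has characteristic zero. -/
def resChar0 (V : VDF K Γ) : Prop := ∀ m : ℕ, 0 < m → V.v (m : K) = 0

/-- Axiom 2: the residue difference field is linear difference closed, phrased at the
level of `K`: for `a_0, …, a_m` in the valuation ring, with some `a_i` a unit, the
equation `1 + Σ_i ā_i σ̄^i(x) = 0` has a solution in the residue field. -/
def axiom2 (V : VDF K Γ) : Prop :=
  ∀ (m : ℕ) (a : Fin (m + 1) → K), (∀ i, 0 ≤ V.v (a i)) → (∃ i, V.v (a i) = 0) →
    ∃ u : K, 0 ≤ V.v u ∧ 0 < V.v (1 + ∑ i : Fin (m + 1), a i * (⇑V.σ)^[(i : ℕ)] u)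

/-- σ-henselianity. -/
def sigmaHenselian (V : VDF K Γ) : Prop :=
  ∀ (n : ℕ) (P : MvPolynomial (Fin (n + 1)) K) (a : K) (γ : Γ),
    V.InSHC P a γ → ∃ b : K, V.v (b - a) = (γ : WithTop Γ) ∧ V.sEval P b = 0

/-- `s` is a pseudo-Cauchy sequence. -/
def IsPC (V : VDF K Γ) {I : Type*} [LinearOrder I] (s : I → K) : Prop :=
  ∃ i0 : I, ∀ i j k : I, i0 ≤ i → i < j → j < k → V.v (s j - s i) < V.v (s k - s j)

/-- `x` is a pseudolimit of `s`, i.e. `v (x - s ρ)` is eventually strictly increasing. -/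
def Plim (V : VDF K Γ) {I : Type*} [LinearOrder I] (s : I → K) (x : K) : Prop :=
  ∃ i0 : I, ∀ i j : I, i0 ≤ i → i < j → V.v (x - s i) < V.v (x - s j)

/-- Equivalence of pc-sequences: they have the same pseudolimits. -/
def EquivPC (V : VDF K Γ) {I : Type*} [LinearOrder I] (s t : I → K) : Prop :=
  ∀ x : K, V.Plim s x ↔ V.Plim t x

/-- Axiom 1 for a difference subfield `E` of `K`: the induced automorphism of the
residue field of `E` is of infinite order, phrased at the level of `E`:
for each `d > 0` there is `y` in the valuation ring of `E` with
`σ̄^d(ȳ) ≠ ȳ`, i.e. `v (σ^d y - y) = 0`. -/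
def axiom1On (V : VDF K Γ) (E : Subfield K) : Prop :=
  ∀ d : ℕ, 0 < d → ∃ y ∈ E, 0 ≤ V.v y ∧ V.v ((⇑V.σ)^[d] y - y) = 0

end VDF


namespace VDF

variable {K : Type*} [Field K] {Γ : Type*} [AddCommGroup Γ] [LinearOrder Γ] [IsOrderedAddMonoid Γ] (V : VDF K Γ)

lemma aux_v_zero : V.v 0 = ⊤ := (V.v_eq_top_iff 0).2 rfl

lemma aux_v_add_eq_left (x y : K) (h : V.v x < V.v y) : V.v (x + y) = V.v x := by
  have hle : V.v x ≤ V.v (x + y) := le_trans (le_min le_rfl h.le) (V.v_add x y)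
  refine le_antisymm ?_ hle
  by_contra hne
  have h2 : V.v x < V.v (x + y) := not_le.1 hne
  have h3 := V.v_add (x + y) (-y)
  have he : x + y + -y = x := by ring
  rw [he, V.v_neg] at h3
  exact absurd h3 (not_le.2 (lt_min h2 h))

lemma aux_v_sub_comm (x y : K) : V.v (x - y) = V.v (y - x) := by
  rw [← V.v_neg (y - x), neg_sub]

lemma aux_v_sum_lt {ι : Type*} (s : Finset ι) (h : ι → K) (c : WithTop Γ) (hc : c < ⊤)
    (hh : ∀ i ∈ s, c < V.v (h i)) : c < V.v (∑ i ∈ s, h i) := by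
  classical
  induction s using Finset.induction with
  | empty => simpa [V.aux_v_zero] using hc
  | @insert a s hns ih =>
    rw [Finset.sum_insert hns]
    exact lt_of_lt_of_le
      (lt_min (hh a (Finset.mem_insert_self a s))
        (ih fun i hi => hh i (Finset.mem_insert_of_mem hi))) (V.v_add _ _)

lemma aux_v_pow (x : K) (m : ℕ) (d : Γ) (hx : V.v x = (d : WithTop Γ)) :
    V.v (x ^ m) = ((m • d : Γ) : WithTop Γ) := by
  induction m with
  | zero => simpa using V.v_one
  | succ m ih => rw [pow_succ, V.v_mul, ih, hx, succ_nsmul, WithTop.coe_add]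

lemma aux_pow_diff (x y : K) (d : Γ) (hx : V.v x = (d : WithTop Γ))
    (hxy : (d : WithTop Γ) < V.v (y - x)) (m : ℕ) :
    ((m • d : Γ) : WithTop Γ) < V.v (y ^ m - x ^ m) := by
  have hy : V.v y = (d : WithTop Γ) := by
    have h1 := V.aux_v_add_eq_left x (y - x) (hx ▸ hxy)
    have he : x + (y - x) = y := by ring
    rw [he, hx] at h1
    exact h1
  induction m with
  | zero =>
    simp only [zero_nsmul, pow_zero, sub_self, V.aux_v_zero, WithTop.coe_zero]
    exact WithTop.coe_lt_top 0
  | succ m ih =>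
    have key : y ^ (m + 1) - x ^ (m + 1) = y * (y ^ m - x ^ m) + (y - x) * x ^ m := by ring
    have h1 : ((m + 1) • d : Γ) = d + m • d := by rw [succ_nsmul, add_comm]
    rw [key]
    have t1 : (((m + 1) • d : Γ) : WithTop Γ) < V.v (y * (y ^ m - x ^ m)) := by
      rw [V.v_mul, hy, h1, WithTop.coe_add]
      exact WithTop.add_lt_add_left WithTop.coe_ne_top ih
    have t2 : (((m + 1) • d : Γ) : WithTop Γ) < V.v ((y - x) * x ^ m) := by
      rw [V.v_mul, V.aux_v_pow x m d hx, h1, WithTop.coe_add]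
      exact WithTop.add_lt_add_right WithTop.coe_ne_top hxy
    exact lt_of_lt_of_le (lt_min t1 t2) (V.v_add _ _)

lemma aux_prod_diff {ι : Type*} (s : Finset ι) (u w : ι → K) (δ : ι → Γ)
    (h : ∀ k ∈ s, V.v (w k) = ((δ k : Γ) : WithTop Γ) ∧
      ((δ k : Γ) : WithTop Γ) < V.v (u k - w k)) :
    V.v (∏ k ∈ s, w k) = ((∑ k ∈ s, δ k : Γ) : WithTop Γ) ∧
      ((∑ k ∈ s, δ k : Γ) : WithTop Γ) < V.v (∏ k ∈ s, u k - ∏ k ∈ s, w k) := by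
  classical
  induction s using Finset.induction with
  | empty =>
    constructor
    · simpa using V.v_one
    · simp only [Finset.prod_empty, sub_self, V.aux_v_zero, Finset.sum_empty, WithTop.coe_zero]
      exact WithTop.coe_lt_top 0
  | @insert k s hks ih =>
    obtain ⟨hw, hd⟩ := h k (Finset.mem_insert_self k s)
    obtain ⟨ihw, ihd⟩ := ih fun i hi => h i (Finset.mem_insert_of_mem hi)
    have hu : V.v (u k) = ((δ k : Γ) : WithTop Γ) := by
      have h1 := V.aux_v_add_eq_left (w k) (u k - w k) (hw ▸ hd)
      have he : w k + (u k - w k) = u k := by ring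
      rw [he, hw] at h1
      exact h1
    constructor
    · rw [Finset.prod_insert hks, V.v_mul, hw, ihw, Finset.sum_insert hks, WithTop.coe_add]
    · rw [Finset.prod_insert hks, Finset.prod_insert hks, Finset.sum_insert hks, WithTop.coe_add]
      have key : u k * ∏ i ∈ s, u i - w k * ∏ i ∈ s, w i
          = u k * (∏ i ∈ s, u i - ∏ i ∈ s, w i) + (u k - w k) * ∏ i ∈ s, w i := by ring
      rw [key]
      have t1 : (δ k : WithTop Γ) + ((∑ i ∈ s, δ i : Γ) : WithTop Γ)
          < V.v (u k * (∏ i ∈ s, u i - ∏ i ∈ s, w i)) := by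
        rw [V.v_mul, hu]
        exact WithTop.add_lt_add_left WithTop.coe_ne_top ihd
      have t2 : (δ k : WithTop Γ) + ((∑ i ∈ s, δ i : Γ) : WithTop Γ)
          < V.v ((u k - w k) * ∏ i ∈ s, w i) := by
        rw [V.v_mul, ihw]
        exact WithTop.add_lt_add_right WithTop.coe_ne_top hd
      exact lt_of_lt_of_le (lt_min t1 t2) (V.v_add _ _)

lemma aux_v_iter (x : K) (d : Γ) (hx : V.v x = (d : WithTop Γ)) (k : ℕ) :
    V.v ((⇑V.σ)^[k] x) = (((⇑V.σΓ)^[k] d : Γ) : WithTop Γ) := by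
  induction k with
  | zero => simpa using hx
  | succ k ih =>
    rw [Function.iterate_succ_apply', V.v_sigma, ih, Function.iterate_succ_apply',
      WithTop.map_coe]

lemma aux_iter_sub (x y : K) (k : ℕ) :
    (⇑V.σ)^[k] (y - x) = (⇑V.σ)^[k] y - (⇑V.σ)^[k] x := by
  induction k with
  | zero => rfl
  | succ k ih =>
    simp only [Function.iterate_succ_apply', ih, map_sub]

lemma aux_iter_lt (x : K) (d : Γ) (h : (d : WithTop Γ) < V.v x) (k : ℕ) :
    (((⇑V.σΓ)^[k] d : Γ) : WithTop Γ) < V.v ((⇑V.σ)^[k] x) := by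
  rcases eq_or_ne (V.v x) ⊤ with ht | ht
  · have hx0 : x = 0 := (V.v_eq_top_iff x).1 ht
    subst hx0
    have hz : (⇑V.σ)^[k] (0 : K) = 0 := by
      induction k with
      | zero => rfl
      | succ k ih => rw [Function.iterate_succ_apply', ih, map_zero]
    rw [hz, V.aux_v_zero]
    exact WithTop.coe_lt_top _
  · obtain ⟨e, he⟩ := WithTop.ne_top_iff_exists.1 ht
    rw [V.aux_v_iter x e he.symm k]
    rw [← he] at h
    exact WithTop.coe_lt_coe.2 (V.σΓ.strictMono.iterate k (WithTop.coe_lt_coe.1 h))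

end VDF

/-- if `v (b - a) > v a` (with `v a = γ`), then `a` is regular for the
σ-polynomial `F` iff `b` is regular for `F` (note `v b = v a = γ`). -/
theorem stmt5 {K : Type*} [Field K] {Γ : Type*} [AddCommGroup Γ] [LinearOrder Γ] [IsOrderedAddMonoid Γ]
    (V : VDF K Γ) (n : ℕ) (P : MvPolynomial (Fin (n + 1)) K) (a b : K) (γ : Γ)
    (ha : V.v a = (γ : WithTop Γ)) (hab : V.v a < V.v (b - a)) :
    V.v (V.sEval P a) = V.Fv P γ ↔ V.v (V.sEval P b) = V.Fv P γ := by
  classical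
  rcases Finset.eq_empty_or_nonempty P.support with hP | hP
  · have hP0 : P = 0 := MvPolynomial.support_eq_empty.1 hP
    subst hP0
    simp [VDF.sEval, VDF.Fv, V.aux_v_zero]
  · have hFvlt : V.Fv P γ < ⊤ := by
      obtain ⟨i, hi⟩ := hP
      have hci : MvPolynomial.coeff i P ≠ 0 := MvPolynomial.mem_support_iff.1 hi
      obtain ⟨c, hc⟩ := WithTop.ne_top_iff_exists.1
        (fun h => hci ((V.v_eq_top_iff _).1 h))
      refine lt_of_le_of_lt (Finset.inf_le hi) ?_
      rw [← hc, ← WithTop.coe_add]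
      exact WithTop.coe_lt_top _
    have hd : V.Fv P γ < V.v (V.sEval P b - V.sEval P a) := by
      rw [VDF.sEval, VDF.sEval, MvPolynomial.eval_eq', MvPolynomial.eval_eq',
        ← Finset.sum_sub_distrib]
      simp_rw [← mul_sub]
      refine V.aux_v_sum_lt _ _ _ hFvlt ?_
      intro i hi
      have hci : MvPolynomial.coeff i P ≠ 0 := MvPolynomial.mem_support_iff.1 hi
      obtain ⟨c, hc⟩ := WithTop.ne_top_iff_exists.1
        (fun h => hci ((V.v_eq_top_iff _).1 h))
      have hh : ∀ k ∈ (Finset.univ : Finset (Fin (n + 1))),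
          V.v (((⇑V.σ)^[(k : ℕ)] a) ^ i k)
            = ((i k • (⇑V.σΓ)^[(k : ℕ)] γ : Γ) : WithTop Γ) ∧
          ((i k • (⇑V.σΓ)^[(k : ℕ)] γ : Γ) : WithTop Γ)
            < V.v (((⇑V.σ)^[(k : ℕ)] b) ^ i k - ((⇑V.σ)^[(k : ℕ)] a) ^ i k) := by
        intro k _
        have hfa : V.v ((⇑V.σ)^[(k : ℕ)] a) = (((⇑V.σΓ)^[(k : ℕ)] γ : Γ) : WithTop Γ) :=
          V.aux_v_iter a γ ha k
        have hdiff : (((⇑V.σΓ)^[(k : ℕ)] γ : Γ) : WithTop Γ)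
            < V.v ((⇑V.σ)^[(k : ℕ)] b - (⇑V.σ)^[(k : ℕ)] a) := by
          rw [← V.aux_iter_sub a b k]
          exact V.aux_iter_lt (b - a) γ (ha ▸ hab) k
        exact ⟨V.aux_v_pow _ _ _ hfa, V.aux_pow_diff _ _ _ hfa hdiff (i k)⟩
      obtain ⟨hw, hlt⟩ := V.aux_prod_diff Finset.univ
        (fun k : Fin (n + 1) => ((⇑V.σ)^[(k : ℕ)] b) ^ i k)
        (fun k : Fin (n + 1) => ((⇑V.σ)^[(k : ℕ)] a) ^ i k)
        (fun k : Fin (n + 1) => i k • (⇑V.σΓ)^[(k : ℕ)] γ) hh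
      have hsig : (∑ k : Fin (n + 1), i k • (⇑V.σΓ)^[(k : ℕ)] γ) = V.sigmaIdx i γ := rfl
      rw [hsig] at hlt
      calc V.Fv P γ ≤ V.v (MvPolynomial.coeff i P) + (V.sigmaIdx i γ : WithTop Γ) :=
            Finset.inf_le hi
        _ = (c : WithTop Γ) + (V.sigmaIdx i γ : WithTop Γ) := by rw [hc]
        _ < (c : WithTop Γ)
              + V.v (∏ k : Fin (n + 1), ((⇑V.σ)^[(k : ℕ)] b) ^ i k
                  - ∏ k : Fin (n + 1), ((⇑V.σ)^[(k : ℕ)] a) ^ i k) :=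
            WithTop.add_lt_add_left WithTop.coe_ne_top hlt
        _ = V.v (MvPolynomial.coeff i P
              * (∏ k : Fin (n + 1), ((⇑V.σ)^[(k : ℕ)] b) ^ i k
                  - ∏ k : Fin (n + 1), ((⇑V.σ)^[(k : ℕ)] a) ^ i k)) := by
            rw [V.v_mul, hc]
    constructor
    · intro hA
      have h1 := V.aux_v_add_eq_left (V.sEval P a) (V.sEval P b - V.sEval P a)
        (by rw [hA]; exact hd)
      have he : V.sEval P a + (V.sEval P b - V.sEval P a) = V.sEval P b := by ring
      rw [he] at h1
      rw [h1]
      exact hA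
    · intro hB
      have hd2 : V.Fv P γ < V.v (V.sEval P a - V.sEval P b) := by
        rw [V.aux_v_sub_comm]; exact hd
      have h1 := V.aux_v_add_eq_left (V.sEval P b) (V.sEval P a - V.sEval P b)
        (by rw [hB]; exact hd2)
      have he : V.sEval P b + (V.sEval P a - V.sEval P b) = V.sEval P a := by ring
      rw [he] at h1
      rw [h1]
      exact hB
end
end

section
/- Let k ⊆ k' be an extension of difference fields and g(x) a nonzero σ-polynomial over k'. Then there exists a nonzero σ-polynomial f(x) over k such that for every y ∈ k, f(y) ≠ 0 implies g(y) ≠ 0. -/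
noncomputable section
open scoped Classical

/-- let `k ⊆ k'` be an extension of difference fields (embedding `ι`
commuting with the distinguished automorphisms) and `g` a nonzero σ-polynomial over
`k'` (encoded as a polynomial `P` in `x, σ(x), …, σ^n(x)`). Then there is a nonzero
σ-polynomial `f` over `k` such that for every `y ∈ k`, `f(y) ≠ 0` implies `g(y) ≠ 0`. -/
theorem stmt6 {k k' : Type*} [Field k] [Field k'] (ι : k →+* k')
    (σk : k ≃+* k) (σk' : k' ≃+* k')
    (hcomm : ∀ x : k, σk' (ι x) = ι (σk x))
    (n : ℕ) (P : MvPolynomial (Fin (n + 1)) k') (hP : P ≠ 0) :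
    ∃ (m : ℕ) (Q : MvPolynomial (Fin (m + 1)) k), Q ≠ 0 ∧
      ∀ y : k,
        MvPolynomial.eval (fun j : Fin (m + 1) => (⇑σk)^[(j : ℕ)] y) Q ≠ 0 →
          MvPolynomial.eval (fun j : Fin (n + 1) => (⇑σk')^[(j : ℕ)] (ι y)) P ≠ 0 := by
  letI : Algebra k k' := ι.toAlgebra
  -- iterates commute
  have hiter : ∀ (j : ℕ) (y : k), (⇑σk')^[j] (ι y) = ι ((⇑σk)^[j] y) := by
    intro j
    induction j with
    | zero => intro y; simp
    | succ j ih =>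
      intro y
      rw [Function.iterate_succ_apply, Function.iterate_succ_apply, hcomm, ih]
  -- pick a nonzero coefficient and a functional
  obtain ⟨m0, hm0⟩ : ∃ m0, MvPolynomial.coeff m0 P ≠ 0 := by
    by_contra h
    push_neg at h
    exact hP (MvPolynomial.ext _ _ fun m => by simpa using h m)
  obtain ⟨φ, hφ⟩ : ∃ φ : Module.Dual k k', φ (MvPolynomial.coeff m0 P) ≠ 0 := by
    by_contra h
    push_neg at h
    exact hm0 ((Module.forall_dual_apply_eq_zero_iff k _).mp h)
  refine ⟨n, ∑ m ∈ P.support, MvPolynomial.monomial m (φ (MvPolynomial.coeff m P)), ?_, ?_⟩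
  · intro h
    have : MvPolynomial.coeff m0
        (∑ m ∈ P.support, MvPolynomial.monomial m (φ (MvPolynomial.coeff m P))) = 0 := by
      rw [h]; simp
    rw [MvPolynomial.coeff_sum] at this
    simp only [MvPolynomial.coeff_monomial] at this
    rw [Finset.sum_eq_single m0 (fun b _ hb => by simp [hb]) (fun hm => by
      simp [MvPolynomial.mem_support_iff] at hm; simp [hm])] at this
    simp at this
    exact hφ this
  · intro y hQ hPz
    apply hQ
    have key : MvPolynomial.eval (fun j : Fin (n + 1) => (⇑σk)^[(j : ℕ)] y)
        (∑ m ∈ P.support, MvPolynomial.monomial m (φ (MvPolynomial.coeff m P)))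
        = φ (MvPolynomial.eval (fun j : Fin (n + 1) => (⇑σk')^[(j : ℕ)] (ι y)) P) := by
      rw [map_sum]
      conv_rhs => rw [MvPolynomial.eval_eq', map_sum]
      refine Finset.sum_congr rfl fun m _ => ?_
      rw [MvPolynomial.eval_monomial]
      have hprod : (∏ j : Fin (n + 1), ((⇑σk')^[(j : ℕ)] (ι y)) ^ m j)
          = ι (∏ j : Fin (n + 1), ((⇑σk)^[(j : ℕ)] y) ^ m j) := by
        rw [map_prod]
        exact Finset.prod_congr rfl fun j _ => by rw [hiter, map_pow]
      rw [hprod]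
      have hsm : MvPolynomial.coeff m P * ι (∏ j : Fin (n + 1), ((⇑σk)^[(j : ℕ)] y) ^ m j)
          = (∏ j : Fin (n + 1), ((⇑σk)^[(j : ℕ)] y) ^ m j) • MvPolynomial.coeff m P := by
        rw [Algebra.smul_def, mul_comm]; rfl
      rw [hsm, map_smul, smul_eq_mul, Finsupp.prod_pow, mul_comm]
    rw [key, hPz, map_zero]
end
end

section
/- Every σ-henselian valued difference field of residue characteristic 0 satisfies Axiom 2: its residue difference field is linear difference closed. -/
noncomputable section
open scoped Classical

section Aux

open MvPolynomial

variable {K : Type*} [Field K] {Γ : Type*} [AddCommGroup Γ] [LinearOrder Γ] [IsOrderedAddMonoid Γ]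

lemma degSum_zero {n : ℕ} : VDF.degSum (0 : Fin n →₀ ℕ) = 0 := by
  simp [VDF.degSum]

lemma degSum_single {n : ℕ} (k : Fin n) (m : ℕ) :
    VDF.degSum (Finsupp.single k m) = m := by
  simp [VDF.degSum, Finsupp.sum_single_index]

lemma degSum_add {n : ℕ} (j l : Fin n →₀ ℕ) :
    VDF.degSum (j + l) = VDF.degSum j + VDF.degSum l := by
  simpa [VDF.degSum] using Finsupp.sum_add_index' (fun _ => rfl) (fun _ _ _ => rfl)

lemma degSum_eq_zero {n : ℕ} {j : Fin n →₀ ℕ} (h : VDF.degSum j = 0) : j = 0 := by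
  have h' : ∑ i ∈ j.support, j i = 0 := h
  rw [Finset.sum_eq_zero_iff] at h'
  ext i
  by_cases hi : i ∈ j.support
  · exact h' i hi
  · simpa using Finsupp.notMem_support_iff.mp hi

lemma degSum_eq_one {n : ℕ} {j : Fin n →₀ ℕ} (h : VDF.degSum j = 1) :
    ∃ k, j = Finsupp.single k 1 := by
  have hne : j ≠ 0 := by
    intro hj; rw [hj, degSum_zero] at h; exact one_ne_zero h.symm
  obtain ⟨k, hk⟩ := Finsupp.support_nonempty_iff.mpr hne
  have hsum : ∑ i ∈ j.support, j i = 1 := h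
  have hcard : j.support.card ≤ 1 := by
    calc j.support.card = ∑ _i ∈ j.support, 1 := by simp
    _ ≤ ∑ i ∈ j.support, j i :=
        Finset.sum_le_sum fun i hi =>
          Nat.one_le_iff_ne_zero.mpr (Finsupp.mem_support_iff.mp hi)
    _ = 1 := hsum
  have hs : j.support = {k} := by
    apply Finset.eq_singleton_iff_unique_mem.mpr
    refine ⟨hk, fun x hx => ?_⟩
    exact Finset.card_le_one.mp hcard x hx k hk
  obtain ⟨_, heq⟩ := Finsupp.support_eq_singleton.mp hs
  have hjk : j k = 1 := by rw [hs] at hsum; simpa using hsum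
  exact ⟨k, by rw [heq, hjk]⟩

/-- The Hasse/Taylor coefficients of the linear σ-polynomial `1 + Σ aᵢ Xᵢ`. -/
lemma hasse_linear {n : ℕ} (a : Fin n → K) (j : Fin n →₀ ℕ) :
    VDF.hasse (1 + ∑ i, C (a i) * X i) j =
      (if j = 0 then (1 + ∑ i, C (a i) * X i : MvPolynomial (Fin n) K) else 0)
      + ∑ i, if Finsupp.single i 1 = j then (C (a i) : MvPolynomial (Fin n) K) else 0 := by
  classical
  unfold VDF.hasse
  rw [map_add, map_one, map_sum]
  simp only [map_mul, MvPolynomial.map_C, MvPolynomial.map_X]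
  rw [map_add, map_one, map_sum]
  simp only [map_mul, MvPolynomial.bind₁_C_right, MvPolynomial.bind₁_X_right]
  simp only [mul_add, ← MvPolynomial.C_mul]
  rw [MvPolynomial.coeff_add, MvPolynomial.coeff_sum]
  simp only [MvPolynomial.coeff_add, MvPolynomial.coeff_C, MvPolynomial.coeff_one,
    MvPolynomial.coeff_C_mul, MvPolynomial.coeff_X', Finset.sum_add_distrib]
  by_cases hj : j = 0
  · subst hj
    simp [Finset.sum_ite_eq, eq_comm]
  · simp only [if_neg hj, if_neg (Ne.symm hj), Finset.sum_const_zero, zero_add]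
    apply Finset.sum_congr rfl
    intro i _
    split <;> simp

lemma sEval_one_add (V : VDF K Γ) {n : ℕ} (a : Fin n → K) (x : K) :
    V.sEval (1 + ∑ i, C (a i) * X i) x
      = 1 + ∑ i : Fin n, a i * (⇑V.σ)^[(i : ℕ)] x := by
  simp [VDF.sEval]

lemma sEval_C (V : VDF K Γ) {n : ℕ} (c : K) (x : K) :
    V.sEval (C c : MvPolynomial (Fin n) K) x = c := by
  simp [VDF.sEval]

lemma v_zero' (V : VDF K Γ) : V.v 0 = ⊤ := (V.v_eq_top_iff 0).mpr rfl

lemma sigmaGamma_zero (V : VDF K Γ) : V.σΓ 0 = 0 := by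
  have h := V.v_sigma 1
  rw [map_one, V.v_one] at h
  have : (0 : WithTop Γ) = ((V.σΓ 0 : Γ) : WithTop Γ) := by
    simpa [← WithTop.coe_zero, WithTop.map_coe] using h
  exact_mod_cast this.symm

lemma sigmaIdx_zero (V : VDF K Γ) {n : ℕ} (j : Fin n →₀ ℕ) :
    V.sigmaIdx j 0 = 0 := by
  unfold VDF.sigmaIdx
  rw [Finset.sum_eq_zero]
  intro k _
  rw [Function.iterate_fixed (sigmaGamma_zero V) (k : ℕ), smul_zero]

lemma sigma_iterate_zero (V : VDF K Γ) (k : ℕ) : (⇑V.σ)^[k] 0 = 0 :=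
  Function.iterate_fixed (map_zero V.σ) k

lemma coeff_single_linear {n : ℕ} (a : Fin n → K) (k : Fin n) :
    MvPolynomial.coeff (Finsupp.single k 1) (1 + ∑ i, C (a i) * X i) = a k := by
  classical
  have hne : (Finsupp.single k 1 : Fin n →₀ ℕ) ≠ 0 :=
    fun h => one_ne_zero (Finsupp.single_eq_zero.mp h)
  rw [MvPolynomial.coeff_add, MvPolynomial.coeff_sum]
  simp only [MvPolynomial.coeff_one, MvPolynomial.coeff_C_mul, MvPolynomial.coeff_X']
  have key : ∀ i : Fin n,
      (a i * if (Finsupp.single i 1 : Fin n →₀ ℕ) = Finsupp.single k 1 then (1 : K) else 0)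
        = if i = k then a i else 0 := by
    intro i
    by_cases hik : i = k
    · subst hik; simp
    · rw [if_neg (fun h => hik ((Finsupp.single_left_inj one_ne_zero).mp h)),
        if_neg hik, mul_zero]
  simp only [key]
  rw [if_neg (Ne.symm hne), zero_add]
  simp

lemma hasse_linear_single {n : ℕ} (a : Fin n → K) (k : Fin n) :
    VDF.hasse (1 + ∑ i, C (a i) * X i) (Finsupp.single k 1) = C (a k) := by
  classical
  rw [hasse_linear,
    if_neg (fun h => one_ne_zero (Finsupp.single_eq_zero.mp h)), zero_add]
  have key : ∀ i : Fin n,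
      (if (Finsupp.single i 1 : Fin n →₀ ℕ) = Finsupp.single k 1
        then (C (a i) : MvPolynomial (Fin n) K) else 0)
      = if i = k then C (a i) else 0 := by
    intro i
    by_cases hik : i = k
    · subst hik; simp
    · rw [if_neg (fun h => hik ((Finsupp.single_left_inj one_ne_zero).mp h)),
        if_neg hik]
  simp only [key]
  simp

lemma hasse_linear_eq_zero {n : ℕ} (a : Fin n → K) (j : Fin n →₀ ℕ)
    (h0 : j ≠ 0) (h1 : ∀ k, j ≠ Finsupp.single k 1) :
    VDF.hasse (1 + ∑ i, C (a i) * X i) j = 0 := by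
  rw [hasse_linear, if_neg h0, zero_add, Finset.sum_eq_zero]
  intro i _
  rw [if_neg (fun h => h1 i h.symm)]

end Aux

/-- every σ-henselian valued difference field of residue characteristic
`0` satisfies Axiom 2: its residue difference field is linear difference closed. -/
theorem stmt11 {K : Type*} [Field K] {Γ : Type*} [AddCommGroup Γ] [LinearOrder Γ] [IsOrderedAddMonoid Γ]
    (V : VDF K Γ) (hchar : V.resChar0) (hh : V.sigmaHenselian) : V.axiom2 := by
  classical
  intro m a ha hex
  obtain ⟨i0, hi0⟩ := hex
  set P : MvPolynomial (Fin (m + 1)) K :=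
    1 + ∑ i, MvPolynomial.C (a i) * MvPolynomial.X i with hP
  have ha0 : a i0 ≠ 0 := by
    intro h
    rw [h, v_zero' V] at hi0
    simp at hi0
  have hEval0 : V.sEval P 0 = 1 := by
    rw [hP, sEval_one_add]
    simp [sigma_iterate_zero V]
  have hvP0 : V.v (V.sEval P 0) = 0 := by rw [hEval0, V.v_one]
  have hh1 : ∀ k : Fin (m + 1),
      V.sEval (VDF.hasse P (Finsupp.single k 1)) 0 = a k := by
    intro k
    rw [hP, hasse_linear_single, sEval_C]
  have hidx : ∀ j : Fin (m + 1) →₀ ℕ,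
      ((V.sigmaIdx j 0 : Γ) : WithTop Γ) = 0 := by
    intro j; rw [sigmaIdx_zero]; exact WithTop.coe_zero
  have hSHC : V.InSHC P 0 0 := by
    refine ⟨⟨Finsupp.single i0 1, ?_,
      fun h => one_ne_zero (Finsupp.single_eq_zero.mp h)⟩, ?_, ?_, ?_⟩
    · rw [MvPolynomial.mem_support_iff, hP, coeff_single_linear]; exact ha0
    · refine ⟨Finsupp.single i0 1, degSum_single i0 1, ?_⟩
      rw [hvP0, hh1, hi0, hidx, add_zero]
    · intro j hj
      obtain ⟨k, rfl⟩ := degSum_eq_one hj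
      rw [hvP0, hh1, hidx, add_zero]
      exact ha k
    · intro j l hj hl hne
      have hdj : 1 ≤ VDF.degSum j :=
        Nat.one_le_iff_ne_zero.mpr (fun h => hj (degSum_eq_zero h))
      have hdl : 1 ≤ VDF.degSum l :=
        Nat.one_le_iff_ne_zero.mpr (fun h => hl (degSum_eq_zero h))
      have hdjl : 2 ≤ VDF.degSum (j + l) := by rw [degSum_add]; omega
      have h2 : VDF.hasse P (j + l) = 0 := by
        rw [hP]
        apply hasse_linear_eq_zero
        · intro h; rw [h, degSum_zero] at hdjl; omega
        · intro k h; rw [h, degSum_single] at hdjl; omega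
      have hsE0 : V.sEval (0 : MvPolynomial (Fin (m + 1)) K) 0 = 0 := by
        simp [VDF.sEval]
      rw [h2, hsE0, v_zero' V, hidx, add_zero, hidx, add_zero]
      have hex1 : ∃ k, j = Finsupp.single k 1 := by
        by_contra hc
        push_neg at hc
        exact hne (by rw [hP]; exact hasse_linear_eq_zero a j hj hc)
      obtain ⟨k, rfl⟩ := hex1
      rw [hh1]
      have hak : a k ≠ 0 := by
        intro h
        apply hne
        rw [hP, hasse_linear_single, h]
        simp
      exact lt_top_iff_ne_top.mpr (fun h => hak ((V.v_eq_top_iff _).mp h))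
  obtain ⟨b, hb1, hb2⟩ := hh m P 0 0 hSHC
  rw [sub_zero] at hb1
  refine ⟨b, ?_, ?_⟩
  · rw [hb1]
    exact le_of_eq WithTop.coe_zero.symm
  · have heq : 1 + ∑ i : Fin (m + 1), a i * (⇑V.σ)^[(i : ℕ)] b = 0 := by
      rw [← sEval_one_add V a b, ← hP]
      exact hb2
    rw [heq, v_zero' V]
    exact lt_top_iff_ne_top.mpr (by simp)
end
end

section
/- Let F be a polynomial in one variable over a nontrivially valued field (K, Γ, v) with divisible value group, let γ ∈ Γ be a tropical zero of F, and let b ∈ K with v(b) = γ. Set G(x) := Σ_{i ≥ 1} F_{(i)}(b) x^i, where F_{(i)} are the Hasse derivatives of F. Then G_v(γ) = F_v(γ). -/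
noncomputable section
open scoped Classical

/-- A valued field `(K, v)` with value group `Γ` (additive, `v 0 = ⊤`). -/
structure VF (K : Type*) [Field K] (Γ : Type*) [AddCommGroup Γ] [LinearOrder Γ] [IsOrderedAddMonoid Γ] where
  v : K → WithTop Γ
  v_eq_top_iff : ∀ x : K, v x = ⊤ ↔ x = 0
  v_one : v 1 = 0
  v_mul : ∀ x y : K, v (x * y) = v x + v y
  v_neg : ∀ x : K, v (-x) = v x
  v_add : ∀ x y : K, min (v x) (v y) ≤ v (x + y)

namespace VF

variable {K : Type*} [Field K] {Γ : Type*} [AddCommGroup Γ] [LinearOrder Γ] [IsOrderedAddMonoid Γ]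

/-- The tropicalization `F_v(γ) = min_i (v (a_i) + i γ)` of a one-variable polynomial
`F = Σ_i a_i x^i` (minimum over indices with `a_i ≠ 0`). -/
def Fv1 (V : VF K Γ) (F : Polynomial K) (γ : Γ) : WithTop Γ :=
  F.support.inf fun i => V.v (F.coeff i) + ((i • γ : Γ) : WithTop Γ)

/-- `γ` is a tropical zero of `F`: the minimum `F_v(γ)` is attained at two distinct
indices. -/
def TropZero (V : VF K Γ) (F : Polynomial K) (γ : Γ) : Prop :=
  ∃ i ∈ F.support, ∃ j ∈ F.support, i ≠ j ∧
    V.v (F.coeff i) + ((i • γ : Γ) : WithTop Γ) = V.Fv1 F γ ∧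
    V.v (F.coeff j) + ((j • γ : Γ) : WithTop Γ) = V.Fv1 F γ

/-- The valuation is nontrivial. -/
def Nontriv (V : VF K Γ) : Prop := ∃ x : K, x ≠ 0 ∧ V.v x ≠ 0

variable (V : VF K Γ)

lemma v_zero : V.v 0 = ⊤ := (V.v_eq_top_iff 0).2 rfl

lemma v_pow_of {b : K} {γ : Γ} (hb : V.v b = (γ : WithTop Γ)) (n : ℕ) :
    V.v (b ^ n) = ((n • γ : Γ) : WithTop Γ) := by
  induction n with
  | zero => simp [V.v_one]
  | succ n ih =>
    rw [pow_succ, V.v_mul, ih, hb, succ_nsmul, WithTop.coe_add]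

lemma v_nat_nonneg (n : ℕ) : 0 ≤ V.v (n : K) := by
  induction n with
  | zero => simp [V.v_zero]
  | succ n ih =>
    push_cast
    refine le_trans ?_ (V.v_add n 1)
    rw [V.v_one]
    exact le_min ih le_rfl

lemma v_sum_ge {ι : Type*} (s : Finset ι) (f : ι → K) (c t : WithTop Γ)
    (h : ∀ i ∈ s, c ≤ V.v (f i) + t) : c ≤ V.v (∑ i ∈ s, f i) + t := by
  classical
  induction s using Finset.induction_on with
  | empty => simp [V.v_zero]
  | @insert a s ha ih =>
    rw [Finset.sum_insert ha]
    have h1 := h _ (Finset.mem_insert_self a s)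
    have h2 := ih fun i hi => h i (Finset.mem_insert_of_mem hi)
    calc c ≤ min (V.v (f a) + t) (V.v (∑ i ∈ s, f i) + t) := le_min h1 h2
      _ = min (V.v (f a)) (V.v (∑ i ∈ s, f i)) + t := min_add_add_right _ _ _
      _ ≤ _ := add_le_add_left (V.v_add _ _) t

lemma v_sum_gt {ι : Type*} (s : Finset ι) (f : ι → K) (c t : WithTop Γ)
    (hc : c < ⊤) (h : ∀ i ∈ s, c < V.v (f i) + t) : c < V.v (∑ i ∈ s, f i) + t := by
  classical
  induction s using Finset.induction_on with
  | empty =>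
    simpa [V.v_zero] using hc
  | @insert a s ha ih =>
    rw [Finset.sum_insert ha]
    have h1 := h _ (Finset.mem_insert_self a s)
    have h2 := ih fun i hi => h i (Finset.mem_insert_of_mem hi)
    calc c < min (V.v (f a) + t) (V.v (∑ i ∈ s, f i) + t) := lt_min h1 h2
      _ = min (V.v (f a)) (V.v (∑ i ∈ s, f i)) + t := min_add_add_right _ _ _
      _ ≤ _ := add_le_add_left (V.v_add _ _) t

lemma v_add_eq_left {x y : K} (h : V.v x < V.v y) : V.v (x + y) = V.v x := by
  refine le_antisymm ?_ (le_trans (le_min le_rfl h.le) (V.v_add x y))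
  by_contra hlt
  push_neg at hlt
  have h2 : min (V.v (x + y)) (V.v (-y)) ≤ V.v (x + y + -y) := V.v_add _ _
  rw [add_neg_cancel_right, V.v_neg] at h2
  exact absurd h2 (not_le.mpr (lt_min hlt h))

end VF

/-- let `F` be a one-variable polynomial over a nontrivially valued
field with divisible value group, `γ` a tropical zero of `F`, and `b` of valuation
`γ`. With `G(x) = Σ_{i ≥ 1} F_(i)(b) x^i` (Hasse derivatives), `G_v(γ) = F_v(γ)`. -/
theorem stmt13 {K : Type*} [Field K] {Γ : Type*} [AddCommGroup Γ] [LinearOrder Γ] [IsOrderedAddMonoid Γ]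
    (V : VF K Γ) (hnt : V.Nontriv)
    (hdiv : ∀ (γ : Γ) (m : ℕ), 0 < m → ∃ δ : Γ, m • δ = γ)
    (F : Polynomial K) (γ : Γ) (htz : V.TropZero F γ)
    (b : K) (hb : V.v b = (γ : WithTop Γ)) :
    V.Fv1 (∑ i ∈ Finset.Icc 1 F.natDegree,
        Polynomial.C ((Polynomial.hasseDeriv i F).eval b) * Polynomial.X ^ i) γ =
      V.Fv1 F γ := by
  classical
  obtain ⟨i0, hi0, j0, hj0, hij, hia, hja⟩ := htz
  set d := F.natDegree with hd
  set M := V.Fv1 F γ with hM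
  set G : Polynomial K := ∑ i ∈ Finset.Icc 1 d,
      Polynomial.C ((Polynomial.hasseDeriv i F).eval b) * Polynomial.X ^ i with hGdef
  set S : Finset ℕ :=
      F.support.filter (fun i => V.v (F.coeff i) + ((i • γ : Γ) : WithTop Γ) = M) with hS
  have hSne : S.Nonempty := ⟨i0, Finset.mem_filter.2 ⟨hi0, hia⟩⟩
  set m := S.max' hSne with hm
  have hmS : m ∈ S := S.max'_mem hSne
  have hmsupp : m ∈ F.support := (Finset.mem_filter.1 hmS).1
  have hmeq : V.v (F.coeff m) + ((m • γ : Γ) : WithTop Γ) = M := (Finset.mem_filter.1 hmS).2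
  have hmd : m ≤ d := Polynomial.le_natDegree_of_mem_supp m hmsupp
  have hm1 : 1 ≤ m := by
    have hi' : i0 ≤ m := S.le_max' _ (Finset.mem_filter.2 ⟨hi0, hia⟩)
    have hj' : j0 ≤ m := S.le_max' _ (Finset.mem_filter.2 ⟨hj0, hja⟩)
    omega
  have hcm : F.coeff m ≠ 0 := Polynomial.mem_support_iff.1 hmsupp
  have hMtop : M < ⊤ := by
    rw [← hmeq]
    have hne : V.v (F.coeff m) ≠ ⊤ := fun h => hcm ((V.v_eq_top_iff _).1 h)
    exact lt_top_iff_ne_top.2 (WithTop.add_ne_top.2 ⟨hne, WithTop.coe_ne_top⟩)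
  have hMle : ∀ i : ℕ, M ≤ V.v (F.coeff i) + ((i • γ : Γ) : WithTop Γ) := by
    intro i
    by_cases hi : i ∈ F.support
    · exact Finset.inf_le hi
    · rw [Polynomial.notMem_support_iff.1 hi, V.v_zero, top_add]; exact le_top
  have hmax : ∀ i : ℕ, m < i → M < V.v (F.coeff i) + ((i • γ : Γ) : WithTop Γ) := by
    intro i hmi
    refine lt_of_le_of_ne (hMle i) fun heq => ?_
    by_cases hi : i ∈ F.support
    · exact absurd (S.le_max' i (Finset.mem_filter.2 ⟨hi, heq.symm⟩)) (not_le.mpr hmi)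
    · rw [Polynomial.notMem_support_iff.1 hi, V.v_zero, top_add] at heq
      exact absurd heq hMtop.ne
  have hterm2 : ∀ k j : ℕ,
      V.v (F.coeff (j + k)) + (((j + k) • γ : Γ) : WithTop Γ) ≤
        V.v (((j + k).choose k : K) * F.coeff (j + k) * b ^ j) + ((k • γ : Γ) : WithTop Γ) := by
    intro k j
    rw [V.v_mul, V.v_mul, V.v_pow_of hb]
    have h1 : (0 : WithTop Γ) ≤ V.v (((j + k).choose k : ℕ) : K) := V.v_nat_nonneg _
    calc V.v (F.coeff (j + k)) + (((j + k) • γ : Γ) : WithTop Γ)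
        = V.v (F.coeff (j + k)) + (((j • γ : Γ) : WithTop Γ) + ((k • γ : Γ) : WithTop Γ)) := by
          rw [← WithTop.coe_add, add_nsmul]
      _ = 0 + (V.v (F.coeff (j + k)) + ((j • γ : Γ) : WithTop Γ) + ((k • γ : Γ) : WithTop Γ)) := by
          rw [zero_add, add_assoc]
      _ ≤ V.v (((j + k).choose k : ℕ) : K) +
            (V.v (F.coeff (j + k)) + ((j • γ : Γ) : WithTop Γ) + ((k • γ : Γ) : WithTop Γ)) :=
          add_le_add_left h1 _
      _ = V.v (((j + k).choose k : ℕ) : K) + V.v (F.coeff (j + k)) + ((j • γ : Γ) : WithTop Γ)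
            + ((k • γ : Γ) : WithTop Γ) := by
          rw [← add_assoc, ← add_assoc]
  have heval : ∀ k : ℕ, (Polynomial.hasseDeriv k F).eval b =
      ∑ j ∈ Finset.range (d + 1), ((j + k).choose k : K) * F.coeff (j + k) * b ^ j := by
    intro k
    rw [Polynomial.eval_eq_sum_range'
      (lt_of_le_of_lt (le_trans (Polynomial.natDegree_hasseDeriv_le F k) (Nat.sub_le d k))
        (Nat.lt_succ_self d))]
    exact Finset.sum_congr rfl fun j _ => by rw [Polynomial.hasseDeriv_coeff]
  have hGcoeff : ∀ k : ℕ, G.coeff k =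
      if k ∈ Finset.Icc 1 d then (Polynomial.hasseDeriv k F).eval b else 0 := by
    intro k
    rw [hGdef, Polynomial.finset_sum_coeff]
    simp only [Polynomial.coeff_C_mul, Polynomial.coeff_X_pow, mul_ite, mul_one, mul_zero]
    exact Finset.sum_ite_eq (Finset.Icc 1 d) k fun i => (Polynomial.hasseDeriv i F).eval b
  have hFle : M ≤ V.Fv1 G γ := by
    refine Finset.le_inf fun k hk => ?_
    have hck : G.coeff k ≠ 0 := Polynomial.mem_support_iff.1 hk
    have hkI : k ∈ Finset.Icc 1 d := by
      by_contra h
      rw [hGcoeff k, if_neg h] at hck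
      exact hck rfl
    rw [hGcoeff k, if_pos hkI, heval k]
    exact V.v_sum_ge _ _ _ _ fun j _ => le_trans (hMle (j + k)) (hterm2 k j)
  have hmI : m ∈ Finset.Icc 1 d := Finset.mem_Icc.2 ⟨hm1, hmd⟩
  have hsplit : (Polynomial.hasseDeriv m F).eval b =
      (∑ j ∈ Finset.range d, ((j + 1 + m).choose m : K) * F.coeff (j + 1 + m) * b ^ (j + 1))
        + F.coeff m := by
    rw [heval m, Finset.sum_range_succ']
    congr 1
    simp [Nat.choose_self]
  have hR : V.v (F.coeff m) <
      V.v (∑ j ∈ Finset.range d, ((j + 1 + m).choose m : K) * F.coeff (j + 1 + m) * b ^ (j + 1)) := by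
    have h2 : M < V.v (∑ j ∈ Finset.range d,
        ((j + 1 + m).choose m : K) * F.coeff (j + 1 + m) * b ^ (j + 1)) + ((m • γ : Γ) : WithTop Γ) :=
      V.v_sum_gt _ _ _ _ hMtop fun j _ =>
        lt_of_lt_of_le (hmax (j + 1 + m) (by omega)) (hterm2 m (j + 1))
    rw [← hmeq] at h2
    by_contra hnot
    push_neg at hnot
    exact absurd h2 (not_lt.mpr (add_le_add_left hnot _))
  have hevalv : V.v ((Polynomial.hasseDeriv m F).eval b) = V.v (F.coeff m) := by
    rw [hsplit, add_comm, V.v_add_eq_left hR]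
  have hGm : G.coeff m = (Polynomial.hasseDeriv m F).eval b := by rw [hGcoeff m, if_pos hmI]
  have hmem : m ∈ G.support := by
    refine Polynomial.mem_support_iff.2 fun h0 => ?_
    rw [hGm] at h0
    have : V.v ((Polynomial.hasseDeriv m F).eval b) = ⊤ := (V.v_eq_top_iff _).2 h0
    rw [hevalv] at this
    exact hcm ((V.v_eq_top_iff _).1 this)
  have hle2 : V.Fv1 G γ ≤ M := by
    refine le_trans (Finset.inf_le hmem) ?_
    rw [hGm, hevalv, hmeq]
  exact le_antisymm hle2 hFle
end
end
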